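/- Let (Σ,P) be a Kelvin–Planck theory with hotness levels H, and let T be a Clausius–Duhem temperature scale on Σ. The following are equivalent: (i) every Clausius–Duhem temperature scale on Σ is a positive multiple of T; (ii) for every q ∈ M(Σ) with ∫_Σ (1/T) dq = 0, the element (0,q) is a member of \hat{P}; (iii) for each pair of hotness levels h', h ∈ H there is a Carnot element of (Σ,P) operating between h' and h; (iv) for each pair of states σ', σ ∈ Σ there is a Carnot element of (Σ,P) of the form (0, c'δ_{σ'} − cδ_σ) with c', c > 0 and c'/c = T(σ')/T(σ). -/

import Mathlib

open Set

noncomputable section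

/-- Signed regular Borel measures on `X`, modeled via the Riesz representation
theorem as the weak-star dual of `C(X, ℝ)`. -/
abbrev Meas (X : Type*) [TopologicalSpace X] := WeakDual ℝ C(X, ℝ)

/-- The ambient space containing `V(X) = M°(X) ⊕ M(X)`; membership in the
subspace `M°(X)` of the first component is expressed by `p.1 1 = 0`. -/
abbrev VSp (X : Type*) [TopologicalSpace X] := Meas X × Meas X

/-- The cone of nonnegative measures. -/
def PosMeas (X : Type*) [TopologicalSpace X] : Set (Meas X) :=
  {μ | ∀ f : C(X, ℝ), (∀ x, 0 ≤ f x) → 0 ≤ μ f}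

variable {X : Type*} [TopologicalSpace X]

/-- The Dirac measure at a point, i.e. the evaluation functional. -/
def dirac (x : X) : Meas X :=
  (⟨⟨⟨fun f => f x, fun _ _ => rfl⟩, fun _ _ => rfl⟩,
    continuous_eval_const x⟩ : C(X, ℝ) →L[ℝ] ℝ)

/-- The set of nonnegative multiples of members of `P`. -/
def coneOf (P : Set (VSp X)) : Set (VSp X) :=
  {x | ∃ c : ℝ, 0 ≤ c ∧ ∃ p ∈ P, x = c • p}

/-- `\hat P`, the weak-star closure of the cone generated by `P`. -/
def hatP (P : Set (VSp X)) : Set (VSp X) :=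
  closure (coneOf P)

/-- A thermodynamical theory: processes have change of condition with total mass
zero (i.e. `P ⊆ V(X)`), and `\hat P` is convex. -/
def IsThermoTheory (P : Set (VSp X)) : Prop :=
  (∀ p ∈ P, p.1 (1 : C(X, ℝ)) = 0) ∧ Convex ℝ (hatP P)

/-- A Kelvin–Planck theory: a thermodynamical theory with
`\hat P ∩ ({0} × M₊(X)) = {(0,0)}`. -/
def IsKelvinPlanck (P : Set (VSp X)) : Prop :=
  IsThermoTheory P ∧ hatP P ∩ (({0} : Set (Meas X)) ×ˢ PosMeas X) = {(0, 0)}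

/-- A Clausius–Duhem pair `(η, T)` for the theory `P`: `η` and `T` are continuous,
`T` is strictly positive, and for every continuous `β` equal pointwise to `1/T`
(such a `β` exists, and is unique, by positivity of `T`), the Clausius–Duhem
inequality `∫ η d(Δm) ≥ ∫ (1/T) dq` holds for every process in `P`. -/
def IsCDPair (P : Set (VSp X)) (η T : C(X, ℝ)) : Prop :=
  (∀ x, 0 < T x) ∧
    ∀ β : C(X, ℝ), (∀ x, β x = (T x)⁻¹) → ∀ p ∈ P, p.2 β ≤ p.1 η

/-- A Clausius–Duhem temperature scale. -/
def IsCDTemp (P : Set (VSp X)) (T : C(X, ℝ)) : Prop :=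
  ∃ η : C(X, ℝ), IsCDPair P η T

/-- Two states are of the same hotness: both `(0, δ_a − δ_b)` and `(0, δ_b − δ_a)`
belong to `\hat P`. -/
def SameHotness (P : Set (VSp X)) (a b : X) : Prop :=
  ((0 : Meas X), dirac a - dirac b) ∈ hatP P ∧
    ((0 : Meas X), dirac b - dirac a) ∈ hatP P

/-- The hotness level of a state. -/
def hotnessLevel (P : Set (VSp X)) (a : X) : Set X :=
  {b | SameHotness P a b}

/-- A subset of the state space that is a hotness level. -/
def IsHotnessLevel (P : Set (VSp X)) (h : Set X) : Prop :=
  ∃ a : X, h = hotnessLevel P a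

/-- The (signed) measure `μ` is supported in the set `A`: `μ` annihilates every
continuous function vanishing on `A`. -/
def SuppIn (μ : Meas X) (A : Set X) : Prop :=
  ∀ f : C(X, ℝ), (∀ x ∈ A, f x = 0) → μ f = 0

/-- `\hat Q` contains a passive heat transfer from hotness level `h` to `h'`:
an element `(0, μ − μ')` of `\hat Q` with `μ, μ'` nonnegative, `supp μ ⊆ h`,
`supp μ' ⊆ h'` and `μ(h) = μ'(h') > 0` (the common value being the total mass). -/
def IsPassiveHT (Q : Set (VSp X)) (h h' : Set X) : Prop :=
  ∃ μ μ' : Meas X, μ ∈ PosMeas X ∧ μ' ∈ PosMeas X ∧ SuppIn μ h ∧ SuppIn μ' h' ∧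
    μ (1 : C(X, ℝ)) = μ' (1 : C(X, ℝ)) ∧ 0 < μ (1 : C(X, ℝ)) ∧
    ((0 : Meas X), μ - μ') ∈ hatP Q

/-- Hotness level `h'` is hotter than `h`: the levels are distinct and every
thermodynamical theory whose closed process cone contains `P` together with a
passive heat transfer from `h` to `h'` fails to be a Kelvin–Planck theory. -/
def Hotter (P : Set (VSp X)) (h' h : Set X) : Prop :=
  h' ≠ h ∧ ∀ Pd : Set (VSp X), IsThermoTheory Pd → P ⊆ hatP Pd →
    IsPassiveHT Pd h h' → ¬ IsKelvinPlanck Pd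

/-- State `a` is hotter than state `b`. -/
def HotterState (P : Set (VSp X)) (a b : X) : Prop :=
  Hotter P (hotnessLevel P a) (hotnessLevel P b)

/-- A Carnot element of the theory `P` operating between hotness levels `h'` and
`h`: a reversible cyclic element `(0, μ' − μ)` with `μ', μ` nonzero nonnegative
measures supported in `h'`, `h` respectively. -/
def IsCarnotBetween (P : Set (VSp X)) (h' h : Set X) (p : VSp X) : Prop :=
  p ∈ hatP P ∧ -p ∈ hatP P ∧
    ∃ μ' μ : Meas X, μ' ∈ PosMeas X ∧ μ ∈ PosMeas X ∧ μ' ≠ 0 ∧ μ ≠ 0 ∧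
      SuppIn μ' h' ∧ SuppIn μ h ∧ p = ((0 : Meas X), μ' - μ)

end


section AuxLemmas

open Set Seminorm

variable {X : Type*} [TopologicalSpace X]

instance instLCSWeakDualCX : LocallyConvexSpace ℝ (WeakDual ℝ C(X,ℝ)) :=
  WeakBilin.locallyConvexSpace (B := topDualPairing ℝ C(X,ℝ))

lemma Meas.sub_apply' (μ ν : Meas X) (f : C(X,ℝ)) : (μ - ν) f = μ f - ν f := rfl
lemma Meas.neg_apply' (μ : Meas X) (f : C(X,ℝ)) : (-μ) f = -(μ f) := rfl
lemma Meas.smul_apply' (c : ℝ) (μ : Meas X) (f : C(X,ℝ)) : (c • μ) f = c * μ f := rfl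
lemma Meas.zero_apply' (f : C(X,ℝ)) : (0 : Meas X) f = 0 := rfl
lemma dirac_apply' (x : X) (f : C(X,ℝ)) : dirac x f = f x := rfl

set_option maxHeartbeats 1000000 in
/-- Every weak-star continuous linear functional on `Meas X` is evaluation at
some continuous function. -/
lemma weakdual_rep (φ : WeakDual ℝ C(X,ℝ) →L[ℝ] ℝ) :
    ∃ g : C(X,ℝ), ∀ μ : WeakDual ℝ C(X,ℝ), φ μ = μ g := by
  have hsem := (topDualPairing ℝ C(X,ℝ)).weakBilin_withSeminorms
  set B := topDualPairing ℝ C(X,ℝ) with hB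
  let φ' : WeakBilin B →ₗ[ℝ] ℝ := φ.toLinearMap
  let q : Seminorm ℝ (WeakBilin B) := (normSeminorm ℝ ℝ).comp φ'
  have hq : Continuous q := by
    have h : Continuous fun μ : WeakBilin B => ‖φ μ‖ := φ.continuous.norm
    exact h
  obtain ⟨s, C, hC0, hle⟩ := Seminorm.bound_of_continuous hsem q hq
  classical
  let L : s → (WeakBilin B →ₗ[ℝ] ℝ) := fun g => B.flip g.1
  have hker : ⨅ g : s, LinearMap.ker (L g) ≤ LinearMap.ker φ' := by
    intro μ hμ
    simp only [Submodule.mem_iInf, LinearMap.mem_ker] at hμ ⊢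
    have h2 : (s.sup (B.toSeminormFamily)) μ = 0 := by
      refine le_antisymm ?_ (apply_nonneg _ μ)
      refine Seminorm.finset_sup_apply_le le_rfl fun g hg => ?_
      have h0 : B μ g = 0 := hμ ⟨g, hg⟩
      exact (show ‖B μ g‖ ≤ 0 by rw [h0, norm_zero])
    have h3 : ‖φ μ‖ ≤ 0 := by
      calc ‖φ μ‖ = q μ := rfl
      _ ≤ (C:ℝ) * (s.sup (B.toSeminormFamily)) μ := hle μ
      _ ≤ 0 := by rw [h2]; simp
    exact norm_le_zero_iff.mp h3
  have hspan : φ' ∈ Submodule.span ℝ (Set.range L) := mem_span_of_iInf_ker_le_ker hker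
  obtain ⟨c, hc⟩ := (Submodule.mem_span_range_iff_exists_fun ℝ).1 hspan
  refine ⟨∑ g : s, c g • (g.1 : C(X,ℝ)), fun μ => ?_⟩
  have h4 := LinearMap.congr_fun hc μ
  simp only [LinearMap.coe_sum, Finset.sum_apply, LinearMap.smul_apply] at h4
  have h5 : φ μ = ∑ g : s, c g * (B μ g.1) := by
    rw [show φ μ = φ' μ from rfl, ← h4]
    erw [Finset.sum_apply]
    exact Finset.sum_congr rfl fun g _ => rfl
  rw [h5, map_sum]
  refine Finset.sum_congr rfl fun g _ => ?_
  rw [map_smul]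
  rfl

/-- Every weak-star continuous linear functional on `VSp X` is of the form
`p ↦ p.1 g + p.2 k`. -/
lemma vsp_rep (f : VSp X →L[ℝ] ℝ) :
    ∃ g k : C(X,ℝ), ∀ p : VSp X, f p = p.1 g + p.2 k := by
  obtain ⟨g, hg⟩ := weakdual_rep (f.comp (ContinuousLinearMap.inl ℝ (Meas X) (Meas X)))
  obtain ⟨k, hk⟩ := weakdual_rep (f.comp (ContinuousLinearMap.inr ℝ (Meas X) (Meas X)))
  refine ⟨g, k, fun p => ?_⟩
  have h1 : p = (p.1, (0:Meas X)) + ((0:Meas X), p.2) := by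
    ext <;> simp
  have h2 := hg p.1
  have h3 := hk p.2
  simp only [ContinuousLinearMap.comp_apply, ContinuousLinearMap.inl_apply,
    ContinuousLinearMap.inr_apply] at h2 h3
  conv_lhs => rw [h1]
  rw [map_add, h2, h3]

lemma posMeas_apply_le [CompactSpace X] {μ : Meas X} (hμ : μ ∈ PosMeas X)
    (f : C(X,ℝ)) : μ f ≤ ‖f‖ * μ (1 : C(X,ℝ)) := by
  have h := hμ (‖f‖ • (1 : C(X,ℝ)) - f) (fun x => by
    have h1 : f x ≤ ‖f‖ := (le_abs_self _).trans (f.norm_coe_le_norm x)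
    simp only [ContinuousMap.sub_apply, ContinuousMap.smul_apply, ContinuousMap.one_apply,
      smul_eq_mul, mul_one, sub_nonneg]
    exact h1)
  rw [map_sub, map_smul] at h
  simp only [smul_eq_mul] at h
  linarith

lemma posMeas_one_pos [CompactSpace X] {μ : Meas X} (hμ : μ ∈ PosMeas X)
    (hne : μ ≠ 0) : 0 < μ (1 : C(X,ℝ)) := by
  have h0 : 0 ≤ μ (1 : C(X,ℝ)) := hμ 1 (fun x => by simp)
  rcases h0.lt_or_eq with h | h
  · exact h
  · exfalso
    apply hne
    apply DFunLike.ext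
    intro f
    have h1 : μ f ≤ 0 := by have := posMeas_apply_le hμ f; rw [← h] at this; simpa using this
    have h2 : μ (-f) ≤ 0 := by
      have := posMeas_apply_le hμ (-f); rw [← h] at this; simpa using this
    rw [map_neg] at h2
    have : μ f = 0 := le_antisymm h1 (by linarith)
    exact this

lemma subset_hatP (P : Set (VSp X)) : P ⊆ hatP P := fun p hp =>
  subset_closure ⟨1, zero_le_one, p, hp, (one_smul _ _).symm⟩

lemma smul_mem_hatP {P : Set (VSp X)} {c : ℝ} (hc : 0 ≤ c) {p : VSp X}
    (hp : p ∈ hatP P) : c • p ∈ hatP P := by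
  refine map_mem_closure (continuous_const_smul c) hp ?_
  rintro x ⟨c₁, hc₁, p₁, hp₁, rfl⟩
  exact ⟨c * c₁, mul_nonneg hc hc₁, p₁, hp₁, smul_smul c c₁ p₁⟩

lemma zero_mem_hatP {P : Set (VSp X)} (hP : IsKelvinPlanck P) :
    (((0 : Meas X), (0 : Meas X)) : VSp X) ∈ hatP P := by
  have h : (((0 : Meas X), (0 : Meas X)) : VSp X) ∈
      ({((0 : Meas X), (0 : Meas X))} : Set (VSp X)) := rfl
  rw [← hP.2] at h
  exact h.1

/-- The Clausius–Duhem inequality extends from `P` to `\hat P`. -/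
lemma cd_hatP {P : Set (VSp X)} {η T β : C(X,ℝ)} (hpair : IsCDPair P η T)
    (hβ : ∀ x, β x = (T x)⁻¹) {p : VSp X} (hp : p ∈ hatP P) : p.2 β ≤ p.1 η := by
  have hclosed : IsClosed {p : VSp X | p.2 β ≤ p.1 η} :=
    isClosed_le ((WeakDual.eval_continuous β).comp continuous_snd)
      ((WeakDual.eval_continuous η).comp continuous_fst)
  have hsub : coneOf P ⊆ {p : VSp X | p.2 β ≤ p.1 η} := by
    rintro x ⟨c, hc, p₀, hp₀, rfl⟩
    have h := hpair.2 β hβ p₀ hp₀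
    show (c • p₀).2 β ≤ (c • p₀).1 η
    have h1 : (c • p₀).2 β = c * (p₀.2 β) := rfl
    have h2 : (c • p₀).1 η = c * (p₀.1 η) := rfl
    rw [h1, h2]
    exact mul_le_mul_of_nonneg_left h hc
  exact closure_minimal hsub hclosed hp

lemma sameHotness_self {P : Set (VSp X)} (hP : IsKelvinPlanck P) (a : X) :
    SameHotness P a a := by
  constructor <;> · rw [sub_self]; exact zero_mem_hatP hP

/-- A Clausius–Duhem `β = 1/T` is constant on hotness levels. -/
lemma cd_eq_of_sameHotness {P : Set (VSp X)} {η T β : C(X,ℝ)} (hpair : IsCDPair P η T)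
    (hβ : ∀ x, β x = (T x)⁻¹) {a x : X} (hx : SameHotness P a x) : β x = β a := by
  have h1 := cd_hatP hpair hβ hx.1
  have h2 := cd_hatP hpair hβ hx.2
  have e0 : ((0 : Meas X)) η = 0 := rfl
  have e1 : ((dirac a - dirac x : Meas X)) β = β a - β x := rfl
  have e2 : ((dirac x - dirac a : Meas X)) β = β x - β a := rfl
  simp only [e0, e1, e2] at h1 h2
  linarith

end AuxLemmas

/-- **Theorem (Essential Uniqueness of a Thermodynamic Temperature Scale).**
Let `(X, P)` be a Kelvin–Planck theory and `T` a Clausius–Duhem temperature scale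
(with entropy partner `η`, and `β = 1/T`).  The following are equivalent:
(i) every Clausius–Duhem temperature scale is a positive multiple of `T`;
(ii) every `q ∈ M(X)` with `∫ (1/T) dq = 0` has `(0, q) ∈ \hat P`;
(iii) between any two hotness levels there is a Carnot element;
(iv) between any two states `a`, `b` there is a Carnot element
`(0, c'·δ_a − c·δ_b)` with `c'/c = T a / T b`. -/
theorem temperature_scale_uniqueness_tfae
    {X : Type*} [TopologicalSpace X] [CompactSpace X] [T2Space X]
    (P : Set (VSp X)) (hP : IsKelvinPlanck P)
    (η T β : C(X, ℝ)) (hpair : IsCDPair P η T) (hβ : ∀ x, β x = (T x)⁻¹) :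
    ((∀ T' : C(X, ℝ), IsCDTemp P T' → ∃ α : ℝ, 0 < α ∧ T' = α • T) ↔
      (∀ q : Meas X, q β = 0 → ((0 : Meas X), q) ∈ hatP P)) ∧
    ((∀ T' : C(X, ℝ), IsCDTemp P T' → ∃ α : ℝ, 0 < α ∧ T' = α • T) ↔
      (∀ a b : X, ∃ p : VSp X,
        IsCarnotBetween P (hotnessLevel P a) (hotnessLevel P b) p)) ∧
    ((∀ T' : C(X, ℝ), IsCDTemp P T' → ∃ α : ℝ, 0 < α ∧ T' = α • T) ↔
      (∀ a b : X, ∃ c' c : ℝ, 0 < c' ∧ 0 < c ∧ c' / c = T a / T b ∧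
        ((0 : Meas X), c' • dirac a - c • dirac b) ∈ hatP P ∧
        -(((0 : Meas X), c' • dirac a - c • dirac b) : VSp X) ∈ hatP P)) := by
  classical
  have hTpos : ∀ x, 0 < T x := hpair.1
  have hβpos : ∀ x, 0 < β x := fun x => by rw [hβ x]; exact inv_pos.2 (hTpos x)
  have hTβ : ∀ x, T x = (β x)⁻¹ := fun x => by rw [hβ x, inv_inv]
  -- (i) → (ii)
  have hA2B : (∀ T' : C(X, ℝ), IsCDTemp P T' → ∃ α : ℝ, 0 < α ∧ T' = α • T) →
      (∀ q : Meas X, q β = 0 → ((0 : Meas X), q) ∈ hatP P) := by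
    intro hA q₀ hq₀
    by_contra hq
    obtain ⟨f, u, hfu, hufx⟩ :=
      geometric_hahn_banach_closed_point hP.1.2 isClosed_closure hq
    have hu0 : 0 < u := by
      have h := hfu _ (zero_mem_hatP hP)
      have h0 : f ((0 : Meas X), (0 : Meas X)) = 0 := by
        have : (((0 : Meas X), (0 : Meas X)) : VSp X) = 0 := rfl
        rw [this, map_zero]
      linarith [h, h0.symm.le]
    have hf_nonpos : ∀ p ∈ hatP P, f p ≤ 0 := by
      intro p hp
      by_contra hpos
      push_neg at hpos
      have h2 : ((u + 1) / f p) • p ∈ hatP P := smul_mem_hatP (by positivity) hp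
      have h3 := hfu _ h2
      rw [map_smul, smul_eq_mul, div_mul_cancel₀ _ (ne_of_gt hpos)] at h3
      linarith
    obtain ⟨g, k, hgk⟩ := vsp_rep f
    have hq₀k : u < q₀ k := by
      have h := hgk ((0 : Meas X), q₀)
      rw [h] at hufx
      simpa [Meas.zero_apply'] using hufx
    obtain ⟨ε, hε, hβk⟩ : ∃ ε : ℝ, 0 < ε ∧ ∀ x, 0 < β x + ε * k x := by
      rcases isEmpty_or_nonempty X with hX | hX
      · exact ⟨1, one_pos, fun x => hX.elim x⟩
      · obtain ⟨x₀, -, hx₀⟩ := isCompact_univ.exists_isMinOn univ_nonempty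
          (β.continuous.continuousOn)
        have hδ : 0 < β x₀ := hβpos x₀
        refine ⟨β x₀ / (‖k‖ + 1), by positivity, fun x => ?_⟩
        have h1 : β x₀ ≤ β x := hx₀ (mem_univ x)
        have h2 : -‖k‖ ≤ k x := by
          have h := k.norm_coe_le_norm x
          rw [Real.norm_eq_abs] at h
          exact (abs_le.1 h).1
        have hk1 : (0:ℝ) < ‖k‖ + 1 := by positivity
        have h3 : β x₀ / (‖k‖ + 1) * (-‖k‖) ≤ β x₀ / (‖k‖ + 1) * k x :=
          mul_le_mul_of_nonneg_left h2 (by positivity)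
        have h4 : β x₀ / (‖k‖ + 1) * ‖k‖ < β x₀ := by
          rw [div_mul_eq_mul_div, div_lt_iff₀ hk1]
          nlinarith [norm_nonneg k]
        nlinarith
    set βε : C(X, ℝ) := β + ε • k with hβεdef
    have hβεx : ∀ x, βε x = β x + ε * k x := fun x => by
      simp [hβεdef, ContinuousMap.add_apply, ContinuousMap.smul_apply, smul_eq_mul]
    have hβεpos : ∀ x, 0 < βε x := fun x => by rw [hβεx]; exact hβk x
    let Tε : C(X, ℝ) := ⟨fun x => (βε x)⁻¹,
      Continuous.inv₀ βε.continuous (fun x => (hβεpos x).ne')⟩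
    have hTεx : ∀ x, Tε x = (βε x)⁻¹ := fun _ => rfl
    have hTεpos : ∀ x, 0 < Tε x := fun x => inv_pos.2 (hβεpos x)
    have hcd : IsCDPair P (η - ε • g) Tε := by
      refine ⟨hTεpos, ?_⟩
      intro β'' hβ'' p hp
      have hββ : β'' = βε := by
        ext x
        rw [hβ'' x, hTεx x, inv_inv]
      subst hββ
      have h1 : p.2 β ≤ p.1 η := hpair.2 β hβ p hp
      have h2 : f p ≤ 0 := hf_nonpos p (subset_hatP P hp)
      rw [hgk p] at h2
      have e1 : p.2 βε = p.2 β + ε * p.2 k := by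
        rw [hβεdef, map_add, map_smul, smul_eq_mul]
      have e2 : p.1 (η - ε • g) = p.1 η - ε * p.1 g := by
        rw [map_sub, map_smul, smul_eq_mul]
      rw [e1, e2]
      nlinarith
    obtain ⟨α, hα, hTα⟩ := hA Tε ⟨η - ε • g, hcd⟩
    have hkβ : ∀ x, k x = ((α⁻¹ - 1) / ε) * β x := by
      intro x
      have h1 : Tε x = α * T x := by rw [hTα]; rfl
      have h2 : (βε x)⁻¹ = α * T x := by rw [← hTεx x, h1]
      have h3 : βε x = (α * T x)⁻¹ := by rw [← h2, inv_inv]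
      have h4 : βε x = α⁻¹ * β x := by rw [h3, hTβ x, mul_inv, inv_inv]
      have h5 := hβεx x
      have h6 : ε * k x = (α⁻¹ - 1) * β x := by
        rw [h4] at h5; linarith
      rw [div_mul_eq_mul_div, eq_div_iff hε.ne']
      linarith
    have hkc : k = ((α⁻¹ - 1) / ε) • β := ContinuousMap.ext fun x => by
      rw [hkβ x]; rfl
    have hq₀k' : q₀ k = ((α⁻¹ - 1) / ε) * q₀ β := by
      rw [hkc, map_smul, smul_eq_mul]
    rw [hq₀, mul_zero] at hq₀k'
    linarith
  -- (ii) → (iv)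
  have hB2D : (∀ q : Meas X, q β = 0 → ((0 : Meas X), q) ∈ hatP P) →
      (∀ a b : X, ∃ c' c : ℝ, 0 < c' ∧ 0 < c ∧ c' / c = T a / T b ∧
        ((0 : Meas X), c' • dirac a - c • dirac b) ∈ hatP P ∧
        -(((0 : Meas X), c' • dirac a - c • dirac b) : VSp X) ∈ hatP P) := by
    intro hB a b
    refine ⟨T a, T b, hTpos a, hTpos b, rfl, ?_, ?_⟩
    · refine hB _ ?_
      have e : (T a • dirac a - T b • dirac b : Meas X) β = T a * β a - T b * β b := rfl
      rw [e, hβ a, hβ b, mul_inv_cancel₀ (hTpos a).ne', mul_inv_cancel₀ (hTpos b).ne',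
        sub_self]
    · have h2 : ((-(T a • dirac a - T b • dirac b) : Meas X)) β = 0 := by
        have e : ((-(T a • dirac a - T b • dirac b) : Meas X)) β
            = -(T a * β a - T b * β b) := rfl
        rw [e, hβ a, hβ b, mul_inv_cancel₀ (hTpos a).ne', mul_inv_cancel₀ (hTpos b).ne',
          sub_self, neg_zero]
      have h3 := hB _ h2
      have e2 : (-(((0 : Meas X), T a • dirac a - T b • dirac b) : VSp X)) =
          (((0 : Meas X), -(T a • dirac a - T b • dirac b)) : VSp X) := by
        rw [Prod.neg_mk, neg_zero]
      rw [e2]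
      exact h3
  -- (iv) → (iii)
  have hD2C : (∀ a b : X, ∃ c' c : ℝ, 0 < c' ∧ 0 < c ∧ c' / c = T a / T b ∧
        ((0 : Meas X), c' • dirac a - c • dirac b) ∈ hatP P ∧
        -(((0 : Meas X), c' • dirac a - c • dirac b) : VSp X) ∈ hatP P) →
      (∀ a b : X, ∃ p : VSp X,
        IsCarnotBetween P (hotnessLevel P a) (hotnessLevel P b) p) := by
    intro hD a b
    obtain ⟨c', c, hc', hc, _, hmem, hnmem⟩ := hD a b
    refine ⟨((0 : Meas X), c' • dirac a - c • dirac b), hmem, hnmem,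
      c' • dirac a, c • dirac b, ?_, ?_, ?_, ?_, ?_, ?_, rfl⟩
    · intro f hf
      have e : (c' • dirac a : Meas X) f = c' * f a := rfl
      rw [e]
      exact mul_nonneg hc'.le (hf a)
    · intro f hf
      have e : (c • dirac b : Meas X) f = c * f b := rfl
      rw [e]
      exact mul_nonneg hc.le (hf b)
    · intro h
      have h3 := congrArg (fun μ : Meas X => μ (1 : C(X,ℝ))) h
      have e : (c' • dirac a : Meas X) (1 : C(X,ℝ)) = c' * 1 := rfl
      have e0 : (0 : Meas X) (1 : C(X,ℝ)) = 0 := rfl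
      simp only [e, e0, mul_one] at h3
      exact hc'.ne' h3
    · intro h
      have h3 := congrArg (fun μ : Meas X => μ (1 : C(X,ℝ))) h
      have e : (c • dirac b : Meas X) (1 : C(X,ℝ)) = c * 1 := rfl
      have e0 : (0 : Meas X) (1 : C(X,ℝ)) = 0 := rfl
      simp only [e, e0, mul_one] at h3
      exact hc.ne' h3
    · intro f hf
      have ha : f a = 0 := hf a (sameHotness_self hP a)
      have e : (c' • dirac a : Meas X) f = c' * f a := rfl
      rw [e, ha, mul_zero]
    · intro f hf
      have hb : f b = 0 := hf b (sameHotness_self hP b)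
      have e : (c • dirac b : Meas X) f = c * f b := rfl
      rw [e, hb, mul_zero]
  -- (iii) → (i)
  have hC2A : (∀ a b : X, ∃ p : VSp X,
        IsCarnotBetween P (hotnessLevel P a) (hotnessLevel P b) p) →
      (∀ T' : C(X, ℝ), IsCDTemp P T' → ∃ α : ℝ, 0 < α ∧ T' = α • T) := by
    intro hC T' hT'
    obtain ⟨η', hpair'⟩ := hT'
    have hT'pos : ∀ x, 0 < T' x := hpair'.1
    let β' : C(X, ℝ) := ⟨fun x => (T' x)⁻¹,
      Continuous.inv₀ T'.continuous (fun x => (hT'pos x).ne')⟩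
    have hβ' : ∀ x, β' x = (T' x)⁻¹ := fun _ => rfl
    have hβ'pos : ∀ x, 0 < β' x := fun x => inv_pos.2 (hT'pos x)
    rcases isEmpty_or_nonempty X with hX | hX
    · exact ⟨1, one_pos, ContinuousMap.ext fun x => hX.elim x⟩
    obtain ⟨b₀⟩ := hX
    have key : ∀ a : X, β' a * β b₀ = β' b₀ * β a := by
      intro a
      obtain ⟨p, hp, hnp, μ', μ, hμ'pos, hμpos, hμ'ne, hμne, hsupp', hsupp, hpeq⟩ :=
        hC a b₀
      have hm' : 0 < μ' (1 : C(X,ℝ)) := posMeas_one_pos hμ'pos hμ'ne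
      have hm : 0 < μ (1 : C(X,ℝ)) := posMeas_one_pos hμpos hμne
      have hval : ∀ (γ ηg Tg : C(X, ℝ)), IsCDPair P ηg Tg → (∀ x, γ x = (Tg x)⁻¹) →
          γ a * μ' (1 : C(X,ℝ)) = γ b₀ * μ (1 : C(X,ℝ)) := by
        intro γ ηg Tg hpg hγ
        have hsa : μ' γ = γ a * μ' (1 : C(X,ℝ)) := by
          have hz : ∀ x ∈ hotnessLevel P a, (γ - γ a • (1 : C(X,ℝ))) x = 0 := by
            intro x hx
            have he : γ x = γ a := cd_eq_of_sameHotness hpg hγ hx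
            simp [ContinuousMap.sub_apply, ContinuousMap.smul_apply, he]
          have h0 := hsupp' _ hz
          rw [map_sub, map_smul, smul_eq_mul] at h0
          linarith
        have hsb : μ γ = γ b₀ * μ (1 : C(X,ℝ)) := by
          have hz : ∀ x ∈ hotnessLevel P b₀, (γ - γ b₀ • (1 : C(X,ℝ))) x = 0 := by
            intro x hx
            have he : γ x = γ b₀ := cd_eq_of_sameHotness hpg hγ hx
            simp [ContinuousMap.sub_apply, ContinuousMap.smul_apply, he]
          have h0 := hsupp _ hz
          rw [map_sub, map_smul, smul_eq_mul] at h0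
          linarith
        have h1 := cd_hatP hpg hγ hp
        have h2 := cd_hatP hpg hγ hnp
        rw [hpeq] at h1 h2
        have e1 : ((((0 : Meas X), μ' - μ) : VSp X)).2 γ = μ' γ - μ γ := rfl
        have e0 : ((((0 : Meas X), μ' - μ) : VSp X)).1 ηg = 0 := rfl
        have e2 : ((-(((0 : Meas X), μ' - μ) : VSp X))).2 γ = -(μ' γ - μ γ) := rfl
        have e3 : ((-(((0 : Meas X), μ' - μ) : VSp X))).1 ηg = 0 := by
          have : ((-(((0 : Meas X), μ' - μ) : VSp X))).1 = (0 : Meas X) := by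
            simp
          rw [this]; rfl
        rw [e1, e0] at h1
        rw [e2, e3] at h2
        have h4 : μ' γ = μ γ := by linarith
        rw [← hsa, ← hsb]; exact h4
      have hEβ := hval β η T hpair hβ
      have hEβ' := hval β' η' T' hpair' hβ'
      have hfac : (β' a * β b₀ - β' b₀ * β a) * μ' (1 : C(X,ℝ)) = 0 := by
        linear_combination β b₀ * hEβ' - β' b₀ * hEβ
      rcases mul_eq_zero.1 hfac with h | h
      · linarith [sub_eq_zero.1 h]
      · exact absurd h hm'.ne'
    refine ⟨T' b₀ / T b₀, div_pos (hT'pos b₀) (hTpos b₀), ContinuousMap.ext fun a => ?_⟩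
    have k := key a
    rw [hβ' a, hβ' b₀, hβ a, hβ b₀] at k
    have h1 : T' a ≠ 0 := (hT'pos a).ne'
    have h2 : T' b₀ ≠ 0 := (hT'pos b₀).ne'
    have h3 : T a ≠ 0 := (hTpos a).ne'
    have h4 : T b₀ ≠ 0 := (hTpos b₀).ne'
    rw [ContinuousMap.smul_apply, smul_eq_mul]
    field_simp at k ⊢
    nlinarith [k]
  exact ⟨⟨hA2B, fun hB => hC2A (hD2C (hB2D hB))⟩,
    ⟨fun hA => hD2C (hB2D (hA2B hA)), hC2A⟩,
    ⟨fun hA => hB2D (hA2B hA), fun hD => hC2A (hD2C hD)⟩⟩
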